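/- Let β be a k-form on a star-shaped open set U ⊆ ℝ^m (k ≥ 1) all of whose coefficient functions in the standard basis are constant along rays through the origin (i.e. f_σ(tx) = f_σ(x) for all t ∈ (0,1]). Then the primitive h_k(β) = (ι_X ∘ α_k)(β) satisfies ‖h_k(β)(x)‖₂ ≤ (‖x‖/√k) · ‖β(x)‖₂ for every x ∈ U. -/

import Mathlib

/-- The Euclidean norm of a pointwise `k`-covector on `ℝ^m`. -/
noncomputable def eucNormK (m k : ℕ) (ω : (Fin k → (Fin m → ℝ)) → ℝ) : ℝ :=
  Real.sqrt (∑ s : {t : Finset (Fin m) // t.card = k},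
    (ω (fun i => Pi.single (s.1.orderEmbOfFin s.2 i) (1 : ℝ))) ^ 2)

open Finset

/-- injective map into a finset of the same card induces a permutation w.r.t. orderEmbOfFin -/
lemma exists_perm_aux {m n : ℕ} (S : Finset (Fin m)) (hS : S.card = n)
    (v : Fin n → Fin m) (hv : Function.Injective v) (hmem : ∀ i, v i ∈ S) :
    ∃ σ : Equiv.Perm (Fin n), ∀ i, S.orderEmbOfFin hS (σ i) = v i := by
  have hcard : Fintype.card {x // x ∈ S} = n := by simp [Fintype.card_coe, hS]
  let v' : Fin n → {x // x ∈ S} := fun i => ⟨v i, hmem i⟩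
  have hv' : Function.Injective v' := fun a b h => hv (congrArg Subtype.val h)
  have hbv : Function.Bijective v' := by
    rw [Fintype.bijective_iff_injective_and_card]; exact ⟨hv', by simp [hcard]⟩
  let w' : Fin n → {x // x ∈ S} := fun i => ⟨S.orderEmbOfFin hS i, S.orderEmbOfFin_mem hS i⟩
  have hw' : Function.Injective w' := fun a b h =>
    (S.orderEmbOfFin hS).injective (congrArg Subtype.val h)
  have hbw : Function.Bijective w' := by
    rw [Fintype.bijective_iff_injective_and_card]; exact ⟨hw', by simp [hcard]⟩
  refine ⟨(Equiv.ofBijective v' hbv).trans (Equiv.ofBijective w' hbw).symm, fun i => ?_⟩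
  have : w' (((Equiv.ofBijective v' hbv).trans (Equiv.ofBijective w' hbw).symm) i) = v' i := by
    simp [Equiv.ofBijective_apply_symm_apply]
  exact congrArg Subtype.val this

lemma emb_congr {m k : ℕ} {s₁ s₂ : Finset (Fin m)} (h : s₁ = s₂)
    (h₁ : s₁.card = k) (h₂ : s₂.card = k) :
    ((fun i => Pi.single (s₁.orderEmbOfFin h₁ i) (1:ℝ)) : Fin k → Fin m → ℝ) =
      (fun i => Pi.single (s₂.orderEmbOfFin h₂ i) (1:ℝ)) := by subst h; rfl

lemma sq_cons_insert {m k : ℕ} (β : (Fin m → ℝ) [⋀^Fin (k+1)]→ₗ[ℝ] ℝ)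
    (s : Finset (Fin m)) (hs : s.card = k) (j : Fin m) (hj : j ∉ s)
    (hS : (insert j s).card = k + 1) :
    (β (Fin.cons (Pi.single j 1) (fun i => Pi.single (s.orderEmbOfFin hs i) (1:ℝ))))^2
      = (β (fun i => Pi.single ((insert j s).orderEmbOfFin hS i) (1:ℝ)))^2 := by
  set S := insert j s with hSdef
  have hjS : j ∈ S := Finset.mem_insert_self j s
  have hse : (S.erase j).card = k := by
    rw [Finset.card_erase_of_mem hjS, hS]; rfl
  obtain ⟨σ, hσ⟩ := exists_perm_aux S hS
      (Fin.cons j (fun i => (S.erase j).orderEmbOfFin hse i))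
      (by
        apply Fin.cons_injective_of_injective
        · rintro ⟨i, hi⟩
          have hmem := (S.erase j).orderEmbOfFin_mem hse i
          simp only at hi
          rw [hi] at hmem
          exact (Finset.mem_erase.mp hmem).1 rfl
        · exact ((S.erase j).orderEmbOfFin hse).injective)
      (by
        intro i
        refine Fin.cases ?_ ?_ i
        · simpa using hjS
        · intro i'
          simpa using Finset.mem_of_mem_erase ((S.erase j).orderEmbOfFin_mem hse i'))
  have htuple : (Fin.cons (Pi.single j (1:ℝ))
        (fun i => Pi.single (s.orderEmbOfFin hs i) (1:ℝ)) : Fin (k+1) → Fin m → ℝ)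
      = (fun i => Pi.single (S.orderEmbOfFin hS i) (1:ℝ)) ∘ σ := by
    have h1 : ((fun i => Pi.single (s.orderEmbOfFin hs i) (1:ℝ)) : Fin k → Fin m → ℝ) =
        (fun i => Pi.single ((S.erase j).orderEmbOfFin hse i) (1:ℝ)) :=
      emb_congr (by rw [hSdef, Finset.erase_insert hj]) hs hse
    funext i
    simp only [h1, Function.comp]
    rw [hσ i]
    exact congrFun (Fin.comp_cons (fun a => Pi.single a (1:ℝ)) j
      (fun i => (S.erase j).orderEmbOfFin hse i)).symm i
  rw [htuple]
  have := β.map_perm (fun i => Pi.single (S.orderEmbOfFin hS i) (1:ℝ)) σ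
  rw [this]
  rcases Int.units_eq_one_or (Equiv.Perm.sign σ) with h | h <;> simp [h, Units.smul_def] <;> rfl

lemma cons_mem_eq_zero {m k : ℕ} (β : (Fin m → ℝ) [⋀^Fin (k+1)]→ₗ[ℝ] ℝ)
    (s : Finset (Fin m)) (hs : s.card = k) (j : Fin m) (hj : j ∈ s) :
    β (Fin.cons (Pi.single j 1) (fun i => Pi.single (s.orderEmbOfFin hs i) (1:ℝ))) = 0 := by
  obtain ⟨i, hi⟩ : ∃ i, s.orderEmbOfFin hs i = j := by
    have := s.range_orderEmbOfFin hs
    have : j ∈ Set.range (s.orderEmbOfFin hs) := by rw [this]; exact hj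
    exact this
  refine β.map_eq_zero_of_eq _ (i := 0) (j := i.succ) ?_ (Fin.succ_ne_zero i).symm
  simp [hi]

lemma sum_sq_double {m k : ℕ} (β : (Fin m → ℝ) [⋀^Fin (k+1)]→ₗ[ℝ] ℝ) :
    ∑ s : {t : Finset (Fin m) // t.card = k}, ∑ j : Fin m,
      (β (Fin.cons (Pi.single j 1)
        (fun i => Pi.single (s.1.orderEmbOfFin s.2 i) (1:ℝ))))^2
    = (k+1) * ∑ S : {t : Finset (Fin m) // t.card = k+1},
        (β (fun i => Pi.single (S.1.orderEmbOfFin S.2 i) (1:ℝ)))^2 := by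
  have step1 : ∀ s : {t : Finset (Fin m) // t.card = k},
      ∑ j : Fin m, (β (Fin.cons (Pi.single j 1)
          (fun i => Pi.single (s.1.orderEmbOfFin s.2 i) (1:ℝ))))^2
      = ∑ j : {j : Fin m // j ∉ s.1}, (β (Fin.cons (Pi.single j.1 1)
          (fun i => Pi.single (s.1.orderEmbOfFin s.2 i) (1:ℝ))))^2 := by
    intro s
    rw [← Finset.sum_subtype s.1ᶜ (by intro j; simp) (fun j => (β (Fin.cons (Pi.single j 1)
          (fun i => Pi.single (s.1.orderEmbOfFin s.2 i) (1:ℝ))))^2)]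
    refine (Finset.sum_subset (Finset.subset_univ _) ?_).symm
    intro j _ hj
    rw [Finset.mem_compl, not_not] at hj
    rw [cons_mem_eq_zero β s.1 s.2 j hj]
    ring
  simp_rw [step1]
  let e : (Σ S : {t : Finset (Fin m) // t.card = k+1}, {j : Fin m // j ∈ S.1}) ≃
      (Σ s : {t : Finset (Fin m) // t.card = k}, {j : Fin m // j ∉ s.1}) :=
    { toFun := fun p => ⟨⟨p.1.1.erase p.2.1,
        by rw [Finset.card_erase_of_mem p.2.2, p.1.2]; omega⟩, ⟨p.2.1, Finset.notMem_erase _ _⟩⟩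
      invFun := fun p => ⟨⟨insert p.2.1 p.1.1,
        by rw [Finset.card_insert_of_notMem p.2.2, p.1.2]⟩, ⟨p.2.1, Finset.mem_insert_self _ _⟩⟩
      left_inv := by
        rintro ⟨⟨S, hS⟩, ⟨j, hj⟩⟩
        simp only [Sigma.mk.inj_iff, Subtype.mk.injEq, Finset.insert_erase hj]
        exact ⟨trivial, (Subtype.heq_iff_coe_eq
          (fun a => by rw [Finset.insert_erase hj])).mpr rfl⟩
      right_inv := by
        rintro ⟨⟨s, hs⟩, ⟨j, hj⟩⟩
        simp only [Sigma.mk.inj_iff, Subtype.mk.injEq, Finset.erase_insert hj]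
        exact ⟨trivial, (Subtype.heq_iff_coe_eq
          (fun a => by rw [Finset.erase_insert hj])).mpr rfl⟩ }
  have hcompat : ∀ p : (Σ S : {t : Finset (Fin m) // t.card = k+1}, {j : Fin m // j ∈ S.1}),
      (β (fun i => Pi.single (p.1.1.orderEmbOfFin p.1.2 i) (1:ℝ)))^2
      = (β (Fin.cons (Pi.single ((e p).2.1) 1)
          (fun i => Pi.single ((e p).1.1.orderEmbOfFin (e p).1.2 i) (1:ℝ))))^2 := by
    rintro ⟨⟨S, hS⟩, ⟨j, hj⟩⟩
    have hse : (S.erase j).card = k := by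
      rw [Finset.card_erase_of_mem hj, hS]; omega
    have hins : (insert j (S.erase j)).card = k + 1 := by
      rw [Finset.insert_erase hj, hS]
    simp only [e, Equiv.coe_fn_mk]
    rw [sq_cons_insert β (S.erase j) hse j (Finset.notMem_erase _ _) hins]
    rw [emb_congr (Finset.insert_erase hj) hins hS]
  calc ∑ s : {t : Finset (Fin m) // t.card = k}, ∑ j : {j : Fin m // j ∉ s.1},
        (β (Fin.cons (Pi.single j.1 1)
          (fun i => Pi.single (s.1.orderEmbOfFin s.2 i) (1:ℝ))))^2
      = ∑ p : (Σ s : {t : Finset (Fin m) // t.card = k}, {j : Fin m // j ∉ s.1}),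
        (β (Fin.cons (Pi.single p.2.1 1)
          (fun i => Pi.single (p.1.1.orderEmbOfFin p.1.2 i) (1:ℝ))))^2 := by
        rw [← Finset.univ_sigma_univ, Finset.sum_sigma]
    _ = ∑ p : (Σ S : {t : Finset (Fin m) // t.card = k+1}, {j : Fin m // j ∈ S.1}),
        (β (fun i => Pi.single (p.1.1.orderEmbOfFin p.1.2 i) (1:ℝ)))^2 :=
        (Fintype.sum_equiv e _ _ hcompat).symm
    _ = ∑ S : {t : Finset (Fin m) // t.card = k+1}, ∑ _j : {j : Fin m // j ∈ S.1},
        (β (fun i => Pi.single (S.1.orderEmbOfFin S.2 i) (1:ℝ)))^2 := by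
        rw [← Finset.univ_sigma_univ, Finset.sum_sigma]
    _ = (k+1) * ∑ S : {t : Finset (Fin m) // t.card = k+1},
        (β (fun i => Pi.single (S.1.orderEmbOfFin S.2 i) (1:ℝ)))^2 := by
        rw [Finset.mul_sum]
        refine Finset.sum_congr rfl fun S _ => ?_
        rw [Finset.sum_const, Finset.card_univ, Fintype.card_coe, S.2]
        push_cast [nsmul_eq_mul]
        ring

lemma expand_cons {m k : ℕ} (β : (Fin m → ℝ) [⋀^Fin (k+1)]→ₗ[ℝ] ℝ)
    (x : Fin m → ℝ) (w : Fin k → (Fin m → ℝ)) :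
    β (Fin.cons x w) = ∑ j, x j * β (Fin.cons (Pi.single j 1) w) := by
  have hx : x = ∑ j, x j • (Pi.single j (1:ℝ) : Fin m → ℝ) := by
    funext a
    simp [Pi.single_apply]
  have h0 : ∀ y : Fin m → ℝ, β (Fin.cons y w) = β.curryLeft y w := fun y => rfl
  have alt_sum_apply : ∀ (s : Finset (Fin m))
      (f : Fin m → ((Fin m → ℝ) [⋀^Fin k]→ₗ[ℝ] ℝ)),
      (∑ i ∈ s, f i) w = ∑ i ∈ s, f i w := by
    intro s f
    induction s using Finset.cons_induction with
    | empty => simp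
    | cons a s ha ih => simp [Finset.sum_insert ha, ih]
  rw [h0]
  conv_lhs => rw [hx]
  rw [map_sum, alt_sum_apply]
  exact Finset.sum_congr rfl fun j _ => by
    rw [LinearMap.map_smul, AlternatingMap.smul_apply, smul_eq_mul, ← h0]

/-- If all coefficients of a `(k+1)`-form `β` on a star-shaped open set `U` are constant
along rays through the origin, then the radial primitive
`h(β)(x)(w) = ∫₀¹ tᵏ β(tx)(x, w) dt` satisfies
`‖h(β)(x)‖₂ ≤ (‖x‖/√(k+1)) ⬝ ‖β(x)‖₂` for every `x ∈ U`. -/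
theorem radial_primitive_estimate_ray_constant {m k : ℕ}
    (U : Set (Fin m → ℝ)) (hUopen : IsOpen U) (hU0 : (0 : Fin m → ℝ) ∈ U)
    (hstar : ∀ x ∈ U, ∀ t ∈ Set.Icc (0 : ℝ) 1, t • x ∈ U)
    (β : (Fin m → ℝ) → ((Fin m → ℝ) [⋀^Fin (k + 1)]→ₗ[ℝ] ℝ))
    (hray : ∀ x ∈ U, ∀ t ∈ Set.Ioc (0 : ℝ) 1, β (t • x) = β x) :
    ∀ x ∈ U,
      eucNormK m k (fun w => ∫ t in (0 : ℝ)..1, t ^ k * β (t • x) (Fin.cons x w)) ≤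
        (Real.sqrt (∑ i, x i ^ 2) / Real.sqrt (k + 1)) *
          eucNormK m (k + 1) (fun w => β x w) := by
  intro x hx
  have hK0 : (0:ℝ) < (k:ℝ) + 1 := by positivity
  have hint : (fun w : Fin k → (Fin m → ℝ) =>
      ∫ t in (0:ℝ)..1, t ^ k * β (t • x) (Fin.cons x w))
      = fun w => (1/((k:ℝ)+1)) * β x (Fin.cons x w) := by
    funext w
    have hcong : ∀ t ∈ Set.Ioc (0:ℝ) 1,
        t ^ k * β (t • x) (Fin.cons x w) = t ^ k * β x (Fin.cons x w) := fun t ht => by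
      rw [hray x hx t ht]
    rw [intervalIntegral.integral_of_le zero_le_one,
        MeasureTheory.setIntegral_congr_fun measurableSet_Ioc hcong,
        ← intervalIntegral.integral_of_le zero_le_one,
        intervalIntegral.integral_mul_const, integral_pow]
    push_cast
    ring
  rw [hint]
  simp only [eucNormK]
  set c : ℝ := 1/((k:ℝ)+1) with hc
  have hc0 : 0 ≤ c := by positivity
  set A : ℝ := ∑ s : {t : Finset (Fin m) // t.card = k},
      (β x (Fin.cons x (fun i => Pi.single (s.1.orderEmbOfFin s.2 i) (1:ℝ))))^2 with hAdef
  set B : ℝ := ∑ S : {t : Finset (Fin m) // t.card = k+1},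
      (β x (fun i => Pi.single (S.1.orderEmbOfFin S.2 i) (1:ℝ)))^2 with hBdef
  set X2 : ℝ := ∑ i, x i ^ 2 with hX2def
  have hX2 : 0 ≤ X2 := Finset.sum_nonneg fun i _ => sq_nonneg _
  have hB : 0 ≤ B := Finset.sum_nonneg fun S _ => sq_nonneg _
  have hsum : ∑ s : {t : Finset (Fin m) // t.card = k},
      (c * β x (Fin.cons x (fun i => Pi.single (s.1.orderEmbOfFin s.2 i) (1:ℝ))))^2
      = c^2 * A := by
    rw [hAdef, Finset.mul_sum]
    exact Finset.sum_congr rfl fun s _ => by ring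
  rw [hsum, Real.sqrt_mul (sq_nonneg c), Real.sqrt_sq hc0]
  have hAle : A ≤ X2 * (((k:ℝ)+1) * B) := by
    have h1 : A ≤ ∑ s : {t : Finset (Fin m) // t.card = k},
        X2 * ∑ j : Fin m, (β x (Fin.cons (Pi.single j 1)
          (fun i => Pi.single (s.1.orderEmbOfFin s.2 i) (1:ℝ))))^2 := by
      refine Finset.sum_le_sum fun s _ => ?_
      rw [expand_cons]
      exact Finset.sum_mul_sq_le_sq_mul_sq Finset.univ x _
    refine h1.trans_eq ?_
    rw [← Finset.mul_sum, sum_sq_double (β x)]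
  calc c * Real.sqrt A ≤ c * Real.sqrt (X2 * (((k:ℝ)+1) * B)) := by
        exact mul_le_mul_of_nonneg_left (Real.sqrt_le_sqrt hAle) hc0
    _ = Real.sqrt X2 / Real.sqrt ((k:ℝ)+1) * Real.sqrt B := by
        rw [Real.sqrt_mul hX2, Real.sqrt_mul (le_of_lt hK0)]
        have hs2 : Real.sqrt ((k:ℝ)+1) * Real.sqrt ((k:ℝ)+1) = (k:ℝ)+1 :=
          Real.mul_self_sqrt (le_of_lt hK0)
        have hsne : Real.sqrt ((k:ℝ)+1) ≠ 0 := by positivity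
        rw [div_mul_eq_mul_div, div_mul_eq_mul_div, eq_div_iff hsne]
        field_simp
        linear_combination (Real.sqrt X2 * Real.sqrt B) * hs2
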